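/- arXiv:1405.5428 — 2 statements merged into one kernel-verified Lean document; each statement's English description precedes it below -/
import Mathlib

section
/- Let d ≥ 1 and let W : ℝ^d → ℝ ∪ {+∞} be measurable, bounded below by a finite constant W_min < 0, locally integrable, symmetric (W(x) = W(−x)), and lower semicontinuous. Let R ≥ 0 and let ρ_R be a global minimiser of the interaction energy E on P_R(ℝ^d). Then W ∗ ρ_R(x) = 2E(ρ_R) for ρ_R-almost every x ∈ ℝ^d, where W ∗ ρ_R(x) = ∫_{ℝ^d} W(x−y) dρ_R(y). -/
open MeasureTheory Filter Metric
open scoped ENNReal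

/-- `ℝ^d` with the Euclidean structure. -/
abbrev Ed (d : ℕ) : Type := EuclideanSpace ℝ (Fin d)

/-- The positive part of an extended real number, as an element of `ℝ≥0∞`. -/
noncomputable def EReal.posPart (x : EReal) : ℝ≥0∞ := (x ⊔ 0).abs

/-- The integral of an `EReal`-valued function, defined as the difference (in `EReal`)
of the lower integrals of the positive and the negative parts. -/
noncomputable def eInt {α : Type*} [MeasurableSpace α] (μ : Measure α) (f : α → EReal) :
    EReal :=
  ((∫⁻ x, (f x).posPart ∂μ : ℝ≥0∞) : EReal) - ((∫⁻ x, (-f x).posPart ∂μ : ℝ≥0∞) : EReal)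

/-- The interaction energy `E(ρ) = (1/2) ∬ W(x-y) dρ(x) dρ(y)`, with values in `EReal`. -/
noncomputable def energy {d : ℕ} (W : Ed d → EReal) (ρ : Measure (Ed d)) : EReal :=
  ((1 / 2 : ℝ) : EReal) * eInt (ρ.prod ρ) (fun p => W (p.1 - p.2))

/-- The support of a measure: the set of points all of whose open neighbourhoods have
positive measure. -/
def msupport {α : Type*} [TopologicalSpace α] [MeasurableSpace α] (μ : Measure α) : Set α :=
  {x | ∀ U : Set α, IsOpen U → x ∈ U → 0 < μ U}

/-- `ρ ∈ P_R(ℝ^d)`: the support of `ρ` is contained in the closed ball `B̄(0,R)`. -/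
def InBall {d : ℕ} (ρ : Measure (Ed d)) (R : ℝ) : Prop :=
  msupport ρ ⊆ Metric.closedBall (0 : Ed d) R

/-- `ρ` is a global minimiser of the interaction energy on `P(ℝ^d)`. -/
def IsMinimiser {d : ℕ} (W : Ed d → EReal) (ρ : Measure (Ed d)) : Prop :=
  IsProbabilityMeasure ρ ∧
    ∀ μ : Measure (Ed d), IsProbabilityMeasure μ → energy W ρ ≤ energy W μ

/-- `ρ` is a global minimiser of the interaction energy on `P_R(ℝ^d)`. -/
def IsMinimiserOn {d : ℕ} (W : Ed d → EReal) (ρ : Measure (Ed d)) (R : ℝ) : Prop :=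
  IsProbabilityMeasure ρ ∧ InBall ρ R ∧
    ∀ μ : Measure (Ed d), IsProbabilityMeasure μ → InBall μ R → energy W ρ ≤ energy W μ

/-! ### Auxiliary lemmas -/

lemma EL.posPart_coe (r : ℝ) : (r : EReal).posPart = ENNReal.ofReal r := by
  rcases le_or_gt r 0 with h | h
  · have : ((r : EReal) ⊔ 0) = 0 := sup_eq_right.2 (by exact_mod_cast h)
    simp [EReal.posPart, this, ENNReal.ofReal_eq_zero.2 h]
  · have : ((r : EReal) ⊔ 0) = (r : EReal) := sup_eq_left.2 (by exact_mod_cast h.le)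
    rw [EReal.posPart, this, EReal.abs_def, abs_of_pos h]

lemma EL.posPart_top : (⊤ : EReal).posPart = ⊤ := by
  simp [EReal.posPart, sup_eq_left.2 (le_top (a := (0:EReal)))]

lemma EL.posPart_bot : (⊥ : EReal).posPart = 0 := by
  simp [EReal.posPart, sup_eq_right.2 (bot_le (a := (0:EReal)))]

lemma EL.posPart_eq_ite (x : EReal) :
    x.posPart = if x = ⊤ then ⊤ else ENNReal.ofReal x.toReal := by
  induction x with
  | bot => simp [EL.posPart_bot]
  | coe r => simp [EL.posPart_coe]
  | top => simp [EL.posPart_top]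

lemma EL.posPart_mono : Monotone EReal.posPart := by
  intro x y h
  induction y with
  | bot => have : x = ⊥ := le_bot_iff.1 h; simp [this, EL.posPart_bot]
  | coe s =>
    induction x with
    | bot => simp [EL.posPart_bot]
    | coe r =>
      rw [EL.posPart_coe, EL.posPart_coe]
      exact ENNReal.ofReal_le_ofReal (by exact_mod_cast h)
    | top => exact absurd h (by simp)
  | top => simp [EL.posPart_top]

lemma EL.measurable_posPart : Measurable EReal.posPart := by
  rw [show EReal.posPart = fun x => if x = ⊤ then (⊤:ℝ≥0∞) else ENNReal.ofReal x.toReal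
      from funext EL.posPart_eq_ite]
  exact Measurable.ite (MeasurableSet.singleton ⊤ : MeasurableSet {x : EReal | x = ⊤})
    measurable_const (ENNReal.measurable_ofReal.comp measurable_ereal_toReal)

lemma EL.coe_ennreal_eq (P : ℝ≥0∞) (h : P ≠ ⊤) :
    ((P : EReal)) = ((P.toReal : ℝ) : EReal) := by
  lift P to NNReal using h
  rw [EReal.coe_nnreal_eq_coe_real]; simp

lemma EL.eInt_coe {α : Type*} [MeasurableSpace α] (μ : Measure α) (f : α → EReal)
    (hP : ∫⁻ x, (f x).posPart ∂μ ≠ ⊤) (hN : ∫⁻ x, (-f x).posPart ∂μ ≠ ⊤) :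
    eInt μ f = (((∫⁻ x, (f x).posPart ∂μ).toReal
      - (∫⁻ x, (-f x).posPart ∂μ).toReal : ℝ) : EReal) := by
  rw [eInt, EL.coe_ennreal_eq _ hP, EL.coe_ennreal_eq _ hN, ← EReal.coe_sub]

lemma EL.eInt_top {α : Type*} [MeasurableSpace α] (μ : Measure α) (f : α → EReal)
    (hP : ∫⁻ x, (f x).posPart ∂μ = ⊤) (hN : ∫⁻ x, (-f x).posPart ∂μ ≠ ⊤) :
    eInt μ f = ⊤ := by
  rw [eInt, hP, EL.coe_ennreal_eq _ hN, EReal.coe_ennreal_top, EReal.top_sub_coe]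

lemma EL.two_half_mul (z : EReal) : ((2:ℝ):EReal) * (((1/2:ℝ):EReal) * z) = z := by
  rw [← mul_assoc, ← EReal.coe_mul]; norm_num

set_option maxHeartbeats 1000000 in
/-- **Lemma (Euler–Lagrange condition on a ball).** If `W` satisfies (H1), (H2), (H3), (H5)
and `ρR` is a global minimiser of the interaction energy on `P_R(ℝ^d)`, then
`W ∗ ρR = 2 E(ρR)` holds `ρR`-almost everywhere. -/
theorem eulerLagrange_on_ball
    {d : ℕ} (hd : 1 ≤ d) (W : Ed d → EReal) (hWmeas : Measurable W)
    (Wmin : ℝ) (hWmin : Wmin < 0) (hbound : ∀ x, (Wmin : EReal) ≤ W x)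
    (hloc : ∀ (x : Ed d) (r : ℝ), 0 < r →
      ∫⁻ y in Metric.ball x r, (W y).abs ∂volume < ⊤)
    (hsym : ∀ x, W (-x) = W x)
    (hlsc : LowerSemicontinuous W)
    (R : ℝ) (hR : 0 ≤ R) (ρR : Measure (Ed d)) (hρR : IsMinimiserOn W ρR R) :
    ∀ᵐ x ∂ρR, eInt ρR (fun y => W (x - y)) = ((2 : ℝ) : EReal) * energy W ρR := by
  classical
  obtain ⟨hprob, hball, hmin⟩ := hρR
  set m : ℝ≥0∞ := ENNReal.ofReal (-Wmin) with hm_def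
  have hm_ne : m ≠ ⊤ := ENNReal.ofReal_ne_top
  have hq_le : ∀ z : Ed d, (-(W z)).posPart ≤ m := by
    intro z
    have h1 : -(W z) ≤ ((-Wmin : ℝ) : EReal) := by
      rw [EReal.coe_neg]; exact EReal.neg_le_neg_iff.2 (hbound z)
    calc (-(W z)).posPart ≤ ((-Wmin : ℝ) : EReal).posPart := EL.posPart_mono h1
    _ = m := EL.posPart_coe _
  have hsub : Measurable fun p : Ed d × Ed d => p.1 - p.2 := measurable_fst.sub measurable_snd
  have hWp : Measurable fun z => (W z).posPart := EL.measurable_posPart.comp hWmeas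
  have hWq : Measurable fun z => (-(W z)).posPart := EL.measurable_posPart.comp hWmeas.neg
  have hF : Measurable fun p : Ed d × Ed d => (W (p.1 - p.2)).posPart := hWp.comp hsub
  have hG : Measurable fun p : Ed d × Ed d => (-(W (p.1 - p.2))).posPart := hWq.comp hsub
  set g : Ed d → ℝ≥0∞ := fun x => ∫⁻ y, (W (x - y)).posPart ∂ρR with hg_def
  set n : Ed d → ℝ≥0∞ := fun x => ∫⁻ y, (-(W (x - y))).posPart ∂ρR with hn_def
  have hg_meas : Measurable g := hF.lintegral_prod_right'
  have hn_meas : Measurable n := hG.lintegral_prod_right'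
  have hn_le : ∀ x, n x ≤ m := by
    intro x
    calc n x ≤ ∫⁻ _, m ∂ρR := lintegral_mono fun y => hq_le _
    _ = m := by simp
  set P := ∫⁻ p, (W (p.1 - p.2)).posPart ∂(ρR.prod ρR) with hP_def
  set N := ∫⁻ p, (-(W (p.1 - p.2))).posPart ∂(ρR.prod ρR) with hN_def
  have hP_eq : P = ∫⁻ x, g x ∂ρR := lintegral_prod _ hF.aemeasurable
  have hN_eq : N = ∫⁻ x, n x ∂ρR := lintegral_prod _ hG.aemeasurable
  have hN_ne : N ≠ ⊤ := by
    refine ne_top_of_le_ne_top hm_ne ?_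
    rw [hN_eq]
    calc ∫⁻ x, n x ∂ρR ≤ ∫⁻ _, m ∂ρR := lintegral_mono hn_le
    _ = m := by simp
  -- pointwise formula for eInt
  have hpt : ∀ x : Ed d, eInt ρR (fun y => W (x - y)) = ((g x : EReal)) - ((n x : EReal)) :=
    fun x => rfl
  have hE : energy W ρR = ((1/2:ℝ):EReal) * (((P : EReal)) - ((N : EReal))) := rfl
  -- the competitor construction
  have hcomp : ∀ A : Set (Ed d), ρR A ≠ 0 →
      IsProbabilityMeasure ((ρR A)⁻¹ • ρR.restrict A) ∧
        InBall ((ρR A)⁻¹ • ρR.restrict A) R := by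
    intro A hc
    constructor
    · constructor
      rw [Measure.smul_apply, Measure.restrict_apply_univ, smul_eq_mul]
      exact ENNReal.inv_mul_cancel hc (measure_ne_top ρR A)
    · intro x hx
      refine hball ?_
      intro U hU hxU
      have h1 := hx U hU hxU
      by_contra h2
      push_neg at h2
      have h3 : ρR U = 0 := le_antisymm h2 zero_le
      have h4 : ((ρR A)⁻¹ • ρR.restrict A) U = 0 := by
        rw [Measure.smul_apply, smul_eq_mul]
        have : ρR.restrict A U = 0 :=
          le_antisymm (le_trans (Measure.restrict_le_self U) h3.le) zero_le
        rw [this, mul_zero]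
      rw [h4] at h1; exact lt_irrefl _ h1
  by_cases hP_top : P = ⊤
  · -- infinite energy case
    have hae : ∀ᵐ x ∂ρR, g x = ⊤ := by
      rw [ae_iff]
      by_contra hpos
      have : ∃ k : ℕ, ρR {x | g x ≤ (k : ℝ≥0∞)} ≠ 0 := by
        by_contra hall
        push_neg at hall
        have hcover : {x | ¬ g x = ⊤} ⊆ ⋃ k : ℕ, {x | g x ≤ (k : ℝ≥0∞)} := by
          intro x hx
          obtain ⟨k, hk⟩ := ENNReal.exists_nat_gt hx
          exact Set.mem_iUnion.2 ⟨k, hk.le⟩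
        have : ρR {x | ¬ g x = ⊤} ≤ 0 := by
          refine le_trans (measure_mono hcover) ?_
          rw [measure_iUnion_null fun k => hall k]
        exact hpos (le_antisymm this zero_le)
      obtain ⟨k, hc⟩ := this
      set A := {x | g x ≤ (k : ℝ≥0∞)} with hA_def
      set c := ρR A with hc_def
      set μ := c⁻¹ • ρR.restrict A with hμ_def
      obtain ⟨hμprob, hμball⟩ := hcomp A hc
      haveI := hμprob
      have hc_ne : c ≠ ⊤ := measure_ne_top _ _
      have hcinv_ne : c⁻¹ ≠ ⊤ := by simpa [ENNReal.inv_ne_top] using hc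
      -- the positive part of the energy of μ is finite
      have hPμ : ∫⁻ p, (W (p.1 - p.2)).posPart ∂(μ.prod μ) ≠ ⊤ := by
        rw [lintegral_prod _ hF.aemeasurable]
        have hinner : ∀ x ∈ A, ∫⁻ y, (W (x - y)).posPart ∂μ ≤ c⁻¹ * k := by
          intro x hx
          rw [hμ_def, lintegral_smul_measure, smul_eq_mul]
          refine mul_le_mul_right ?_ _
          calc ∫⁻ y, (W (x - y)).posPart ∂(ρR.restrict A)
              ≤ ∫⁻ y, (W (x - y)).posPart ∂ρR :=
                lintegral_mono' Measure.restrict_le_self le_rfl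
            _ ≤ (k : ℝ≥0∞) := hx
        have houter : ∫⁻ x, (∫⁻ y, (W (x - y)).posPart ∂μ) ∂μ ≤ c⁻¹ * (c⁻¹ * k * c) := by
          rw [hμ_def, lintegral_smul_measure, smul_eq_mul]
          refine mul_le_mul_right ?_ _
          calc ∫⁻ x, (∫⁻ y, (W (x - y)).posPart ∂μ) ∂(ρR.restrict A)
              ≤ ∫⁻ _ in A, c⁻¹ * k ∂ρR := by
                refine setLIntegral_mono' ?_ hinner
                exact measurableSet_le hg_meas measurable_const
            _ = c⁻¹ * k * c := by rw [setLIntegral_const]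
        refine ne_top_of_le_ne_top ?_ houter
        exact ENNReal.mul_ne_top hcinv_ne
          (ENNReal.mul_ne_top (ENNReal.mul_ne_top hcinv_ne (ENNReal.natCast_ne_top k)) hc_ne)
      have hNμ : ∫⁻ p, (-(W (p.1 - p.2))).posPart ∂(μ.prod μ) ≠ ⊤ := by
        refine ne_top_of_le_ne_top hm_ne ?_
        calc ∫⁻ p, (-(W (p.1 - p.2))).posPart ∂(μ.prod μ) ≤ ∫⁻ _, m ∂(μ.prod μ) :=
            lintegral_mono fun p => hq_le _
        _ = m := by simp
      have hEμ : energy W μ ≠ ⊤ := by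
        rw [energy, EL.eInt_coe _ _ hPμ hNμ, ← EReal.coe_mul]
        exact EReal.coe_ne_top _
      have hEρ : energy W ρR = ⊤ := by
        rw [hE, hP_top, EReal.coe_ennreal_top, EL.coe_ennreal_eq _ hN_ne,
          EReal.top_sub_coe, EReal.coe_mul_top_of_pos (by norm_num)]
      have := hmin μ hμprob hμball
      rw [hEρ, top_le_iff] at this
      exact hEμ this
    filter_upwards [hae] with x hx
    have h1 : eInt ρR (fun y => W (x - y)) = ⊤ := by
      rw [hpt x, hx, EReal.coe_ennreal_top,
        EL.coe_ennreal_eq _ (ne_top_of_le_ne_top hm_ne (hn_le x)), EReal.top_sub_coe]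
    have h2 : ((2:ℝ):EReal) * energy W ρR = ⊤ := by
      rw [hE, hP_top, EReal.coe_ennreal_top, EL.coe_ennreal_eq _ hN_ne,
        EReal.top_sub_coe, EReal.coe_mul_top_of_pos (by norm_num),
        EReal.coe_mul_top_of_pos (by norm_num)]
    rw [h1, h2]
  · -- finite energy case
    set Pr := P.toReal with hPr_def
    set Nr := N.toReal with hNr_def
    set twoE : ℝ := Pr - Nr with htwoE_def
    have hE_coe : energy W ρR = (((1/2) * twoE : ℝ) : EReal) := by
      rw [hE, EL.coe_ennreal_eq _ hP_top, EL.coe_ennreal_eq _ hN_ne, ← EReal.coe_sub,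
        ← EReal.coe_mul]
    set i : Ed d → ℝ := fun x => (g x).toReal - (n x).toReal with hi_def
    have hi_meas : Measurable i :=
      (ENNReal.measurable_toReal.comp hg_meas).sub (ENNReal.measurable_toReal.comp hn_meas)
    have hg_fin : ∀ᵐ x ∂ρR, g x < ⊤ := by
      refine ae_lt_top hg_meas ?_
      rw [← hP_eq]; exact hP_top
    have hn_fin : ∀ x, n x ≠ ⊤ := fun x => ne_top_of_le_ne_top hm_ne (hn_le x)
    -- Step 2 : no set of positive measure where i ≤ twoE - ε
    have step2 : ∀ ε : ℝ, 0 < ε → ρR {x | i x ≤ twoE - ε} = 0 := by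
      intro ε hε
      by_contra hc0
      set B := {x | i x ≤ twoE - ε} with hB_def
      have hB_meas : MeasurableSet B := measurableSet_le hi_meas measurable_const
      set c := ρR B with hc_def
      have hc : c ≠ 0 := hc0
      set μ := c⁻¹ • ρR.restrict B with hμ_def
      obtain ⟨hμprob, hμball⟩ := hcomp B hc
      haveI : IsProbabilityMeasure μ := hμprob
      have hc_ne : c ≠ ⊤ := measure_ne_top _ _
      have hcinv_ne : c⁻¹ ≠ ⊤ := by simpa [ENNReal.inv_ne_top] using hc
      -- inner integrals against μ
      set Gp : Ed d → ℝ≥0∞ := fun x => ∫⁻ y, (W (x - y)).posPart ∂μ with hGp_def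
      set Gq : Ed d → ℝ≥0∞ := fun x => ∫⁻ y, (-(W (x - y))).posPart ∂μ with hGq_def
      have hGp_meas : Measurable Gp := hF.lintegral_prod_right'
      have hGq_meas : Measurable Gq := hG.lintegral_prod_right'
      have hGq_le : ∀ x, Gq x ≤ m := by
        intro x
        calc Gq x ≤ ∫⁻ _, m ∂μ := lintegral_mono fun y => hq_le _
        _ = m := by simp
      -- symmetry of the kernels
      have hppsymm : ∀ x y : Ed d, (W (x - y)).posPart = (W (y - x)).posPart := by
        intro x y
        rw [show x - y = -(y - x) from (neg_sub y x).symm, hsym]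
      have hqqsymm : ∀ x y : Ed d, (-(W (x - y))).posPart = (-(W (y - x))).posPart := by
        intro x y
        rw [show x - y = -(y - x) from (neg_sub y x).symm, hsym]
      -- cross terms
      set K2 := ∫⁻ x, g x ∂μ with hK2_def
      set L2 := ∫⁻ x, n x ∂μ with hL2_def
      set K3 := ∫⁻ x, Gp x ∂μ with hK3_def
      set L3 := ∫⁻ x, Gq x ∂μ with hL3_def
      have hswapP : ∫⁻ x, Gp x ∂ρR = K2 := by
        have h1 : ∫⁻ x, Gp x ∂ρR = ∫⁻ x, ∫⁻ y, (W (y - x)).posPart ∂μ ∂ρR :=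
          lintegral_congr fun x => lintegral_congr fun y => by rw [hppsymm]
        have hmP : AEMeasurable (Function.uncurry fun x y => (W (y - x)).posPart) (ρR.prod μ) := by
          have h2 : Measurable fun p : Ed d × Ed d => (W (p.2 - p.1)).posPart :=
            hWp.comp (measurable_snd.sub measurable_fst)
          exact h2.aemeasurable
        rw [h1, lintegral_lintegral_swap hmP]
      have hswapN : ∫⁻ x, Gq x ∂ρR = L2 := by
        have h1 : ∫⁻ x, Gq x ∂ρR = ∫⁻ x, ∫⁻ y, (-(W (y - x))).posPart ∂μ ∂ρR :=
          lintegral_congr fun x => lintegral_congr fun y => by rw [hqqsymm]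
        have hmQ : AEMeasurable (Function.uncurry fun x y => (-(W (y - x))).posPart) (ρR.prod μ) := by
          have h2 : Measurable fun p : Ed d × Ed d => (-(W (p.2 - p.1))).posPart :=
            hWq.comp (measurable_snd.sub measurable_fst)
          exact h2.aemeasurable
        rw [h1, lintegral_lintegral_swap hmQ]
      -- finiteness of the cross terms
      have hK2_ne : K2 ≠ ⊤ := by
        rw [hK2_def, hμ_def, lintegral_smul_measure]
        refine ENNReal.mul_ne_top hcinv_ne ?_
        refine ne_top_of_le_ne_top hP_top ?_
        rw [hP_eq]
        exact lintegral_mono' Measure.restrict_le_self le_rfl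
      have hGp_le : ∀ x, Gp x ≤ c⁻¹ * g x := by
        intro x
        simp only [hGp_def, hμ_def, lintegral_smul_measure, smul_eq_mul]
        exact mul_le_mul_right (lintegral_mono' Measure.restrict_le_self le_rfl) _
      have hK3_ne : K3 ≠ ⊤ := by
        refine ne_top_of_le_ne_top (ENNReal.mul_ne_top hcinv_ne hK2_ne) ?_
        calc K3 ≤ ∫⁻ x, c⁻¹ * g x ∂μ := lintegral_mono hGp_le
        _ = c⁻¹ * K2 := lintegral_const_mul _ hg_meas
      have hL2_le : L2 ≠ ⊤ := by
        refine ne_top_of_le_ne_top hm_ne ?_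
        calc L2 ≤ ∫⁻ _, m ∂μ := lintegral_mono hn_le
        _ = m := by simp
      have hL3_le : L3 ≠ ⊤ := by
        refine ne_top_of_le_ne_top hm_ne ?_
        calc L3 ≤ ∫⁻ _, m ∂μ := lintegral_mono hGq_le
        _ = m := by simp
      set b : ℝ := K2.toReal - L2.toReal with hb_def
      set e2 : ℝ := K3.toReal - L3.toReal with he2_def
      -- b ≤ twoE - ε
      have hμB : ∀ᵐ x ∂μ, x ∈ B := by
        rw [hμ_def]
        exact Measure.ae_smul_measure (ae_restrict_mem hB_meas) _
      have int_gμ : Integrable (fun x => (g x).toReal) μ :=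
        integrable_toReal_of_lintegral_ne_top hg_meas.aemeasurable hK2_ne
      have int_nμ : Integrable (fun x => (n x).toReal) μ :=
        integrable_toReal_of_lintegral_ne_top hn_meas.aemeasurable hL2_le
      have int_iμ : Integrable i μ := int_gμ.sub int_nμ
      have hgμ_fin : ∀ᵐ x ∂μ, g x < ⊤ := ae_lt_top hg_meas hK2_ne
      have hbeq : b = ∫ x, i x ∂μ := by
        rw [hi_def, integral_sub int_gμ int_nμ,
          integral_toReal hg_meas.aemeasurable hgμ_fin,
          integral_toReal hn_meas.aemeasurable
            (ae_of_all _ fun x => lt_top_iff_ne_top.2 (hn_fin x))]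
      have hb : b ≤ twoE - ε := by
        rw [hbeq]
        calc ∫ x, i x ∂μ ≤ ∫ _, (twoE - ε) ∂μ := by
              refine integral_mono_ae int_iμ (integrable_const _) ?_
              filter_upwards [hμB] with x hx
              exact hx
        _ = twoE - ε := by simp
      -- the master inequality
      have master : ∀ τ : ℝ, 0 < τ → τ ≤ 1/2 →
          twoE ≤ (1-τ)^2*twoE + 2*τ*(1-τ)*b + τ^2*e2 := by
        intro τ hτ0 hτh
        have hτ1 : τ ≤ 1 := by linarith
        set t := ENNReal.ofReal τ with ht_def
        have ht_le1 : t ≤ 1 := ENNReal.ofReal_le_one.2 hτ1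
        have ht_ne : t ≠ ⊤ := ENNReal.ofReal_ne_top
        set a := 1 - t with ha_def
        have ha_le1 : a ≤ 1 := tsub_le_self
        have ha_ne : a ≠ ⊤ := ne_top_of_le_ne_top ENNReal.one_ne_top ha_le1
        have ht_toReal : t.toReal = τ := ENNReal.toReal_ofReal hτ0.le
        have ha_toReal : a.toReal = 1 - τ := by
          rw [ha_def, ENNReal.toReal_sub_of_le ht_le1 ENNReal.one_ne_top, ht_toReal,
            ENNReal.toReal_one]
        set σ : Measure (Ed d) := a • ρR + t • μ with hσ_def
        haveI hσprob : IsProbabilityMeasure σ := by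
          constructor
          rw [hσ_def, Measure.add_apply, Measure.smul_apply, Measure.smul_apply,
            measure_univ, measure_univ, smul_eq_mul, smul_eq_mul, mul_one, mul_one]
          exact tsub_add_cancel_of_le ht_le1
        have hσball : InBall σ R := by
          intro x hx
          refine hball ?_
          intro U hU hxU
          have h1 := hx U hU hxU
          by_contra h2
          push_neg at h2
          have h3 : ρR U = 0 := le_antisymm h2 zero_le
          have h4 : μ U = 0 := by
            rw [hμ_def, Measure.smul_apply, smul_eq_mul]
            have : ρR.restrict B U = 0 :=
              le_antisymm (le_trans (Measure.restrict_le_self U) h3.le) zero_le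
            rw [this, mul_zero]
          have h5 : σ U = 0 := by
            rw [hσ_def, Measure.add_apply, Measure.smul_apply, Measure.smul_apply, h3, h4,
              smul_eq_mul, smul_eq_mul, mul_zero, mul_zero, add_zero]
          rw [h5] at h1; exact lt_irrefl _ h1
        -- expansion of the double integrals
        have hexpP : ∀ ν : Measure (Ed d),
            ∫⁻ x, (a * g x + t * Gp x) ∂ν = a * ∫⁻ x, g x ∂ν + t * ∫⁻ x, Gp x ∂ν := by
          intro ν
          rw [lintegral_add_left (hg_meas.const_mul a), lintegral_const_mul _ hg_meas,
            lintegral_const_mul _ hGp_meas]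
        have hexpN : ∀ ν : Measure (Ed d),
            ∫⁻ x, (a * n x + t * Gq x) ∂ν = a * ∫⁻ x, n x ∂ν + t * ∫⁻ x, Gq x ∂ν := by
          intro ν
          rw [lintegral_add_left (hn_meas.const_mul a), lintegral_const_mul _ hn_meas,
            lintegral_const_mul _ hGq_meas]
        have hinnerP : ∀ x : Ed d, ∫⁻ y, (W (x - y)).posPart ∂σ = a * g x + t * Gp x := by
          intro x
          rw [hσ_def, lintegral_add_measure, lintegral_smul_measure, lintegral_smul_measure,
              smul_eq_mul, smul_eq_mul]
        have hinnerN : ∀ x : Ed d, ∫⁻ y, (-(W (x - y))).posPart ∂σ = a * n x + t * Gq x := by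
          intro x
          rw [hσ_def, lintegral_add_measure, lintegral_smul_measure, lintegral_smul_measure,
              smul_eq_mul, smul_eq_mul]
        have hPσ : ∫⁻ p, (W (p.1 - p.2)).posPart ∂(σ.prod σ)
            = a*(a*P + t*K2) + t*(a*K2 + t*K3) := by
          rw [lintegral_prod _ hF.aemeasurable]
          calc ∫⁻ x, ∫⁻ y, (W (x - y)).posPart ∂σ ∂σ
              = ∫⁻ x, (a * g x + t * Gp x) ∂σ := lintegral_congr hinnerP
          _ = a * ∫⁻ x, (a * g x + t * Gp x) ∂ρR + t * ∫⁻ x, (a * g x + t * Gp x) ∂μ := by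
              rw [hσ_def, lintegral_add_measure, lintegral_smul_measure, lintegral_smul_measure,
              smul_eq_mul, smul_eq_mul]
          _ = a*(a*P + t*K2) + t*(a*K2 + t*K3) := by
              rw [hexpP ρR, hexpP μ, hswapP, ← hP_eq, ← hK2_def, ← hK3_def]
        have hNσ : ∫⁻ p, (-(W (p.1 - p.2))).posPart ∂(σ.prod σ)
            = a*(a*N + t*L2) + t*(a*L2 + t*L3) := by
          rw [lintegral_prod _ hG.aemeasurable]
          calc ∫⁻ x, ∫⁻ y, (-(W (x - y))).posPart ∂σ ∂σ
              = ∫⁻ x, (a * n x + t * Gq x) ∂σ := lintegral_congr hinnerN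
          _ = a * ∫⁻ x, (a * n x + t * Gq x) ∂ρR + t * ∫⁻ x, (a * n x + t * Gq x) ∂μ := by
              rw [hσ_def, lintegral_add_measure, lintegral_smul_measure, lintegral_smul_measure,
              smul_eq_mul, smul_eq_mul]
          _ = a*(a*N + t*L2) + t*(a*L2 + t*L3) := by
              rw [hexpN ρR, hexpN μ, hswapN, ← hN_eq, ← hL2_def, ← hL3_def]
        have hPσ_ne : a*(a*P + t*K2) + t*(a*K2 + t*K3) ≠ ⊤ :=
          ENNReal.add_ne_top.2 ⟨ENNReal.mul_ne_top ha_ne (ENNReal.add_ne_top.2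
            ⟨ENNReal.mul_ne_top ha_ne hP_top, ENNReal.mul_ne_top ht_ne hK2_ne⟩),
            ENNReal.mul_ne_top ht_ne (ENNReal.add_ne_top.2
            ⟨ENNReal.mul_ne_top ha_ne hK2_ne, ENNReal.mul_ne_top ht_ne hK3_ne⟩)⟩
        have hNσ_ne : a*(a*N + t*L2) + t*(a*L2 + t*L3) ≠ ⊤ :=
          ENNReal.add_ne_top.2 ⟨ENNReal.mul_ne_top ha_ne (ENNReal.add_ne_top.2
            ⟨ENNReal.mul_ne_top ha_ne hN_ne, ENNReal.mul_ne_top ht_ne hL2_le⟩),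
            ENNReal.mul_ne_top ht_ne (ENNReal.add_ne_top.2
            ⟨ENNReal.mul_ne_top ha_ne hL2_le, ENNReal.mul_ne_top ht_ne hL3_le⟩)⟩
        -- the energy of σ
        have hEσ : energy W σ = (((1/2) * ((a*(a*P + t*K2) + t*(a*K2 + t*K3)).toReal
            - (a*(a*N + t*L2) + t*(a*L2 + t*L3)).toReal) : ℝ) : EReal) := by
          rw [energy, eInt, hPσ, hNσ, EL.coe_ennreal_eq _ hPσ_ne, EL.coe_ennreal_eq _ hNσ_ne,
            ← EReal.coe_sub, ← EReal.coe_mul]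
        have hle := hmin σ hσprob hσball
        rw [hE_coe, hEσ, EReal.coe_le_coe_iff] at hle
        -- toReal computations
        have ePσ : (a*(a*P + t*K2) + t*(a*K2 + t*K3)).toReal
            = (1-τ)*((1-τ)*Pr + τ*K2.toReal) + τ*((1-τ)*K2.toReal + τ*K3.toReal) := by
          rw [ENNReal.toReal_add (ENNReal.mul_ne_top ha_ne (ENNReal.add_ne_top.2
              ⟨ENNReal.mul_ne_top ha_ne hP_top, ENNReal.mul_ne_top ht_ne hK2_ne⟩))
              (ENNReal.mul_ne_top ht_ne (ENNReal.add_ne_top.2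
              ⟨ENNReal.mul_ne_top ha_ne hK2_ne, ENNReal.mul_ne_top ht_ne hK3_ne⟩)),
            ENNReal.toReal_mul, ENNReal.toReal_mul,
            ENNReal.toReal_add (ENNReal.mul_ne_top ha_ne hP_top)
              (ENNReal.mul_ne_top ht_ne hK2_ne),
            ENNReal.toReal_add (ENNReal.mul_ne_top ha_ne hK2_ne)
              (ENNReal.mul_ne_top ht_ne hK3_ne),
            ENNReal.toReal_mul, ENNReal.toReal_mul, ENNReal.toReal_mul, ENNReal.toReal_mul,
            ha_toReal, ht_toReal]
        have eNσ : (a*(a*N + t*L2) + t*(a*L2 + t*L3)).toReal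
            = (1-τ)*((1-τ)*Nr + τ*L2.toReal) + τ*((1-τ)*L2.toReal + τ*L3.toReal) := by
          rw [ENNReal.toReal_add (ENNReal.mul_ne_top ha_ne (ENNReal.add_ne_top.2
              ⟨ENNReal.mul_ne_top ha_ne hN_ne, ENNReal.mul_ne_top ht_ne hL2_le⟩))
              (ENNReal.mul_ne_top ht_ne (ENNReal.add_ne_top.2
              ⟨ENNReal.mul_ne_top ha_ne hL2_le, ENNReal.mul_ne_top ht_ne hL3_le⟩)),
            ENNReal.toReal_mul, ENNReal.toReal_mul,
            ENNReal.toReal_add (ENNReal.mul_ne_top ha_ne hN_ne)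
              (ENNReal.mul_ne_top ht_ne hL2_le),
            ENNReal.toReal_add (ENNReal.mul_ne_top ha_ne hL2_le)
              (ENNReal.mul_ne_top ht_ne hL3_le),
            ENNReal.toReal_mul, ENNReal.toReal_mul, ENNReal.toReal_mul, ENNReal.toReal_mul,
            ha_toReal, ht_toReal]
        rw [ePσ, eNσ] at hle
        rw [htwoE_def, hb_def, he2_def]
        nlinarith [hle]
      -- choose τ and derive a contradiction
      set A := |e2 - twoE| with hA_def
      have hA0 : 0 ≤ A := abs_nonneg _
      set τ := min (1/2 : ℝ) (ε / (2*(1 + A))) with hτ_def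
      have hτ0 : 0 < τ := lt_min (by norm_num) (by positivity)
      have hτh : τ ≤ 1/2 := min_le_left _ _
      have hτA : τ * (1 + A) ≤ ε / 2 := by
        have h1 : τ ≤ ε / (2*(1 + A)) := min_le_right _ _
        have h2 : (0:ℝ) < 1 + A := by linarith
        have h3 : τ * (1 + A) ≤ (ε / (2*(1 + A))) * (1 + A) :=
          mul_le_mul_of_nonneg_right h1 h2.le
        have h4 : (ε / (2*(1 + A))) * (1 + A) = ε / 2 := by
          field_simp
        linarith
      have hmas := master τ hτ0 hτh
      have hXle : e2 - twoE ≤ A := le_abs_self _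
      have hτ1' : τ ≤ 1 := by linarith
      have h3 : 2*τ*(1-τ)*b ≤ 2*τ*(1-τ)*(twoE-ε) :=
        mul_le_mul_of_nonneg_left hb (by nlinarith)
      have h4 : τ^2*(e2 - twoE) ≤ τ^2*A := mul_le_mul_of_nonneg_left hXle (sq_nonneg τ)
      have h5 : τ^2*A ≤ τ*(ε/2) := by nlinarith
      have h6 : τ*ε ≤ 2*τ*(1-τ)*ε := by nlinarith [mul_pos hτ0 hε]
      have key : twoE ≤ twoE + τ^2*(e2 - twoE) - 2*τ*(1-τ)*ε := by
        calc twoE ≤ (1-τ)^2*twoE + 2*τ*(1-τ)*(twoE-ε) + τ^2*e2 := by linarith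
        _ = twoE + τ^2*(e2 - twoE) - 2*τ*(1-τ)*ε := by ring
      have hτε : 0 < τ*ε := mul_pos hτ0 hε
      linarith
    -- Step 3 : i ≥ twoE a.e.
    have step3 : ∀ᵐ x ∂ρR, twoE ≤ i x := by
      rw [ae_iff]
      have hsub3 : {x | ¬ twoE ≤ i x} ⊆ ⋃ k : ℕ, {x | i x ≤ twoE - 1/(k+1)} := by
        intro x hx
        push_neg at hx
        obtain ⟨k, hk⟩ := exists_nat_one_div_lt (K := ℝ) (sub_pos.2 hx)
        refine Set.mem_iUnion.2 ⟨k, ?_⟩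
        simp only [Set.mem_setOf_eq]
        have : (1 : ℝ)/(k+1) < twoE - i x := hk
        linarith
      refine le_antisymm (le_trans (measure_mono hsub3) ?_) zero_le
      exact le_of_eq (measure_iUnion_null fun k => step2 (1/(k+1)) (by positivity))
    -- Step 4 : the average of i is twoE
    have int_g : Integrable (fun x => (g x).toReal) ρR := by
      refine integrable_toReal_of_lintegral_ne_top hg_meas.aemeasurable ?_
      rw [← hP_eq]; exact hP_top
    have int_n : Integrable (fun x => (n x).toReal) ρR := by
      refine integrable_toReal_of_lintegral_ne_top hn_meas.aemeasurable ?_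
      rw [← hN_eq]; exact hN_ne
    have int_i : Integrable i ρR := int_g.sub int_n
    have step4 : ∫ x, i x ∂ρR = twoE := by
      rw [hi_def]
      rw [integral_sub int_g int_n,
        integral_toReal hg_meas.aemeasurable hg_fin,
        integral_toReal hn_meas.aemeasurable (ae_of_all _ fun x => lt_top_iff_ne_top.2 (hn_fin x)),
        ← hP_eq, ← hN_eq]
    -- Step 5 : i = twoE a.e.
    have step5 : ∀ᵐ x ∂ρR, i x = twoE := by
      have hnonneg : 0 ≤ᵐ[ρR] fun x => i x - twoE := by
        filter_upwards [step3] with x hx; simpa using hx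
      have hint : Integrable (fun x => i x - twoE) ρR := int_i.sub (integrable_const _)
      have hzero : ∫ x, (i x - twoE) ∂ρR = 0 := by
        rw [integral_sub int_i (integrable_const _), step4, integral_const]
        simp
      have := (integral_eq_zero_iff_of_nonneg_ae hnonneg hint).1 hzero
      filter_upwards [this] with x hx
      have : i x - twoE = 0 := hx
      linarith
    -- conclusion
    filter_upwards [hg_fin, step5] with x hx1 hx2
    rw [hpt x, EL.coe_ennreal_eq _ hx1.ne, EL.coe_ennreal_eq _ (hn_fin x), ← EReal.coe_sub,
      hE_coe, ← EReal.coe_mul]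
    have h3 : (g x).toReal - (n x).toReal = twoE := hx2
    rw [h3]
    exact (EL.two_half_mul _).symm
end

section
/- Let d ≥ 1 and let W : ℝ^d → ℝ ∪ {+∞} be measurable, bounded below by a finite constant W_min < 0, locally integrable, symmetric (W(x) = W(−x)), and lower semicontinuous. Let ρ be a global minimiser of the interaction energy E on P(ℝ^d). Then W ∗ ρ(x) = 2E(ρ) for ρ-almost every x ∈ ℝ^d, where W ∗ ρ(x) = ∫_{ℝ^d} W(x−y) dρ(y). -/
open MeasureTheory Filter Metric
open scoped ENNReal

lemma EL_coe_enn (x : ℝ≥0∞) (hx : x ≠ ⊤) : (x : EReal) = ((x.toReal : ℝ) : EReal) := by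
  have h := EReal.coe_ennreal_ofReal (x := x.toReal)
  rw [max_eq_left ENNReal.toReal_nonneg] at h
  rw [← h, ENNReal.ofReal_toReal hx]

lemma EL_meas_abs : Measurable EReal.abs :=
  EReal.measurable_of_measurable_real (by
    simpa [EReal.abs_def] using (measurable_id.norm.ennreal_ofReal :
      Measurable fun p : ℝ => ENNReal.ofReal ‖p‖))

lemma EL_meas_add_const (k : ℝ) : Measurable (fun x : EReal => x + (k : EReal)) :=
  EReal.measurable_of_measurable_real
    (measurable_coe_real_ereal.comp (measurable_id.add_const k))

lemma EL_meas_neg : Measurable (fun x : EReal => -x) := by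
  exact measurable_neg

lemma EL_coe_sup (a b : ℝ) : ((a ⊔ b : ℝ) : EReal) = (a : EReal) ⊔ (b : EReal) := by
  rcases le_total a b with h | h <;> simp [h, max_eq_left, max_eq_right]

/-- pointwise identity: `(x+k).abs + negPart x = posPart x + ofReal k` -/
lemma EL_pointwise (k : ℝ) (hk : 0 ≤ k) (x : EReal) (hx : -(k : EReal) ≤ x) :
    (x + (k : EReal)).abs + (-x).posPart = x.posPart + ENNReal.ofReal k := by
  induction x with
  | bot =>
      exfalso
      have : -(k : EReal) = ⊥ := le_bot_iff.mp hx
      simpa using this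
  | coe r =>
      have hr : -k ≤ r := by
        have := hx
        rw [← EReal.coe_neg, EReal.coe_le_coe_iff] at this
        exact this
      have e1 : ((r : EReal) + (k : EReal)).abs = ENNReal.ofReal (r + k) := by
        rw [← EReal.coe_add, EReal.abs_def, abs_of_nonneg (by linarith)]
      have e2 : (-(r : EReal)).posPart = ENNReal.ofReal ((-r) ⊔ 0) := by
        rw [EReal.posPart, ← EReal.coe_neg, ← EReal.coe_zero, ← EL_coe_sup, EReal.abs_def,
          abs_of_nonneg (le_max_right _ _)]
      have e3 : (r : EReal).posPart = ENNReal.ofReal (r ⊔ 0) := by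
        rw [EReal.posPart, ← EReal.coe_zero, ← EL_coe_sup, EReal.abs_def, abs_of_nonneg (le_max_right _ _)]
      rw [e1, e2, e3, ← ENNReal.ofReal_add (by linarith) (le_max_right _ _),
        ← ENNReal.ofReal_add (le_max_right _ _) hk]
      congr 1
      rcases le_total r 0 with h | h
      · rw [max_eq_left (by linarith), max_eq_right h]; ring
      · rw [max_eq_right (by linarith), max_eq_left h]; ring
  | top =>
      have e1 : ((⊤ : EReal) + (k : EReal)).abs = ⊤ := by rw [EReal.top_add_coe]; rfl
      have e3 : (⊤ : EReal).posPart = ⊤ := by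
        rw [EReal.posPart]; simp
      rw [e1, e3, top_add]
      simp

lemma EL_negPart_le (k : ℝ) (hk : 0 ≤ k) (x : EReal) (hx : -(k : EReal) ≤ x) :
    (-x).posPart ≤ ENNReal.ofReal k := by
  induction x with
  | bot =>
      exfalso
      have : -(k : EReal) = ⊥ := le_bot_iff.mp hx
      simpa using this
  | coe r =>
      have hr : -k ≤ r := by
        rw [← EReal.coe_neg, EReal.coe_le_coe_iff] at hx
        exact hx
      have e2 : (-(r : EReal)).posPart = ENNReal.ofReal ((-r) ⊔ 0) := by
        rw [EReal.posPart, ← EReal.coe_neg, ← EReal.coe_zero, ← EL_coe_sup, EReal.abs_def,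
          abs_of_nonneg (le_max_right _ _)]
      rw [e2]
      exact ENNReal.ofReal_le_ofReal (by rcases le_total r 0 with h|h <;> simp <;> constructor <;> linarith)
  | top =>
      have : (-(⊤ : EReal)).posPart = 0 := by
        rw [EReal.posPart]; simp
      rw [this]
      exact zero_le

lemma EL_abs_add_le (k : ℝ) (hk : 0 ≤ k) (x : EReal) :
    (x + (k : EReal)).abs ≤ x.abs + ENNReal.ofReal k := by
  induction x with
  | bot => simp
  | coe r =>
      rw [← EReal.coe_add, EReal.abs_def, EReal.abs_def,
        ← ENNReal.ofReal_add (abs_nonneg _) hk]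
      exact ENNReal.ofReal_le_ofReal ((abs_add_le _ _).trans (by rw [abs_of_nonneg hk]))
  | top => simp [EReal.top_add_coe]
open MeasureTheory Filter Metric
open scoped ENNReal

/-- Key representation: for a probability measure and `f ≥ -k`,
`eInt μ f = ∫⁻ (f+k).abs - k`. -/
lemma EL_eInt_eq {α : Type*} [MeasurableSpace α] (μ : Measure α) [IsProbabilityMeasure μ]
    (f : α → EReal) (hf : Measurable f) (k : ℝ) (hk : 0 ≤ k)
    (hb : ∀ x, -(k : EReal) ≤ f x) :
    eInt μ f = ((∫⁻ x, (f x + (k : EReal)).abs ∂μ : ℝ≥0∞) : EReal) - ((k : ℝ) : EReal) := by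
  classical
  set P : ℝ≥0∞ := ∫⁻ x, (f x).posPart ∂μ with hP
  set N : ℝ≥0∞ := ∫⁻ x, (-f x).posPart ∂μ with hN
  set Gg : ℝ≥0∞ := ∫⁻ x, (f x + (k : EReal)).abs ∂μ with hGg
  have hmeas_pos : Measurable fun x => (f x).posPart := by
    apply EL_meas_abs.comp
    exact (hf.sup measurable_const)
  have hmeas_negpart : Measurable fun x => (-f x).posPart := by
    apply EL_meas_abs.comp
    exact ((hf.neg).sup measurable_const)
  have hmeas_G : Measurable fun x => (f x + (k : EReal)).abs := by
    apply EL_meas_abs.comp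
    exact (EL_meas_add_const k).comp hf
  have hNle : N ≤ ENNReal.ofReal k := by
    calc N ≤ ∫⁻ _, ENNReal.ofReal k ∂μ :=
          lintegral_mono fun x => EL_negPart_le k hk (f x) (hb x)
    _ = ENNReal.ofReal k := by simp
  have hNtop : N ≠ ⊤ := (hNle.trans_lt ENNReal.ofReal_lt_top).ne
  have hkey : Gg + N = P + ENNReal.ofReal k := by
    have h1 : Gg + N = ∫⁻ x, ((f x + (k : EReal)).abs + (-f x).posPart) ∂μ :=
      (lintegral_add_left hmeas_G _).symm
    have h2 : P + ENNReal.ofReal k = ∫⁻ x, ((f x).posPart + ENNReal.ofReal k) ∂μ := by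
      rw [lintegral_add_left hmeas_pos]
      simp [hP]
    rw [h1, h2]
    congr 1
    funext x
    exact EL_pointwise k hk (f x) (hb x)
  show ((P : ℝ≥0∞) : EReal) - ((N : ℝ≥0∞) : EReal) = (Gg : EReal) - (k : EReal)
  by_cases hGtop : Gg = ⊤
  · have hPtop : P = ⊤ := by
      by_contra hP'
      have : P + ENNReal.ofReal k ≠ ⊤ := by
        simp [hP', ENNReal.add_ne_top, ENNReal.ofReal_ne_top]
      rw [← hkey] at this
      exact this (by simp [hGtop])
    rw [hPtop, hGtop]
    rw [EL_coe_enn N hNtop]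
    simp only [EReal.coe_ennreal_top]
    rw [EReal.top_sub_coe, EReal.top_sub_coe]
  · have hPtop : P ≠ ⊤ := by
      intro hP'
      rw [hP'] at hkey
      have : Gg + N = ⊤ := by rw [hkey]; simp
      rcases ENNReal.add_eq_top.mp this with h | h
      · exact hGtop h
      · exact hNtop h
    have hreal : P.toReal + k = Gg.toReal + N.toReal := by
      have := congrArg ENNReal.toReal hkey
      rw [ENNReal.toReal_add hGtop hNtop, ENNReal.toReal_add hPtop ENNReal.ofReal_ne_top,
        ENNReal.toReal_ofReal hk] at this
      linarith
    rw [EL_coe_enn N hNtop, EL_coe_enn P hPtop, EL_coe_enn Gg hGtop,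
      ← EReal.coe_sub, ← EReal.coe_sub, EReal.coe_eq_coe_iff]
    linarith
/-- Elementary quadratic inequality lemma. -/
lemma EL_quad {i c m : ℝ} (h : ∀ t : ℝ, 0 < t → t < 1 →
    i ≤ (1 - t) * ((1 - t) * i + t * c) + t * ((1 - t) * c + t * m)) :
    i ≤ c := by
  by_contra hc
  push_neg at hc
  set D : ℝ := i - 2 * c + m with hD
  have h1 : 0 < i - c := by linarith
  have hD1 : (0 : ℝ) < |D| + 1 := by positivity
  set t : ℝ := min (1/2) ((i - c) / (|D| + 1)) with ht
  have ht0 : 0 < t := lt_min (by norm_num) (div_pos h1 hD1)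
  have ht1 : t < 1 := lt_of_le_of_lt (min_le_left _ _) (by norm_num)
  have htD : t * D ≤ i - c := by
    calc t * D ≤ t * |D| := mul_le_mul_of_nonneg_left (le_abs_self D) ht0.le
    _ ≤ ((i - c) / (|D| + 1)) * |D| :=
        mul_le_mul_of_nonneg_right (min_le_right _ _) (abs_nonneg D)
    _ ≤ ((i - c) / (|D| + 1)) * (|D| + 1) :=
        mul_le_mul_of_nonneg_left (by linarith) (by positivity)
    _ = i - c := div_mul_cancel₀ _ hD1.ne'
  have hht := h t ht0 ht1
  have e1 : i + t * (2 * (c - i) + t * D) = (1 - t) * ((1 - t) * i + t * c) + t * ((1 - t) * c + t * m) := by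
    rw [hD]; ring
  have e2 : 0 ≤ t * (2 * (c - i) + t * D) := by linarith
  have e3 : t * (2 * (c - i) + t * D) ≤ t * (2 * (c - i) + (i - c)) :=
    mul_le_mul_of_nonneg_left (by nlinarith [mul_le_mul_of_nonneg_left htD ht0.le]) ht0.le
  have e4 : t * (2 * (c - i) + (i - c)) = t * (c - i) := by ring
  have e5 : t * (c - i) < 0 := mul_neg_of_pos_of_neg ht0 (by linarith)
  linarith
/-- `ELphi G ν x = ∫⁻ y, G (x - y) ∂ν`. -/
noncomputable def ELphi {d : ℕ} (G : Ed d → ℝ≥0∞) (ν : Measure (Ed d)) : Ed d → ℝ≥0∞ :=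
  fun x => ∫⁻ y, G (x - y) ∂ν

/-- The bilinear form `Jf G μ ν = ∬ G (x - y) ∂μ ∂ν`. -/
noncomputable def Jf {d : ℕ} (G : Ed d → ℝ≥0∞) (μ ν : Measure (Ed d)) : ℝ≥0∞ :=
  ∫⁻ x, ELphi G ν x ∂μ

lemma EL_phi_meas {d : ℕ} {G : Ed d → ℝ≥0∞} (hG : Measurable G) (ν : Measure (Ed d))
    [SFinite ν] : Measurable (ELphi G ν) :=
  Measurable.lintegral_prod_right' (hG.comp (measurable_fst.sub measurable_snd))

lemma EL_Jf_prod {d : ℕ} {G : Ed d → ℝ≥0∞} (hG : Measurable G) (μ ν : Measure (Ed d))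
    [SFinite ν] : (∫⁻ p, G (p.1 - p.2) ∂(μ.prod ν)) = Jf G μ ν :=
  lintegral_prod _ (hG.comp (measurable_fst.sub measurable_snd)).aemeasurable

lemma EL_Jf_swap {d : ℕ} {G : Ed d → ℝ≥0∞} (hG : Measurable G)
    (hGsym : ∀ z, G (-z) = G z) (α β : Measure (Ed d)) [SFinite α] [SFinite β] :
    Jf G α β = Jf G β α := by
  show (∫⁻ x, ∫⁻ y, G (x - y) ∂β ∂α) = ∫⁻ x, ∫⁻ y, G (x - y) ∂α ∂β
  have hum : AEMeasurable (Function.uncurry fun x y : Ed d => G (x - y)) (α.prod β) := by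
    exact ((Measurable.comp hG (measurable_fst.sub measurable_snd) :
      Measurable fun p : Ed d × Ed d => G (p.1 - p.2))).aemeasurable
  rw [lintegral_lintegral_swap hum]
  refine lintegral_congr fun a => lintegral_congr fun b => ?_
  rw [← neg_sub a b, hGsym]

lemma EL_Jf_expand {d : ℕ} {G : Ed d → ℝ≥0∞} (hG : Measurable G)
    (ρ μ : Measure (Ed d)) [SFinite ρ] [SFinite μ] (s : ℝ≥0∞) :
    Jf G (((1 : ℝ≥0∞) - s) • ρ + s • μ) (((1 : ℝ≥0∞) - s) • ρ + s • μ)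
      = ((1 : ℝ≥0∞) - s) * (((1 : ℝ≥0∞) - s) * Jf G ρ ρ + s * Jf G ρ μ)
        + s * (((1 : ℝ≥0∞) - s) * Jf G μ ρ + s * Jf G μ μ) := by
  set c : ℝ≥0∞ := (1 : ℝ≥0∞) - s with hc
  have hφρ : Measurable (ELphi G ρ) := EL_phi_meas hG ρ
  have hφμ : Measurable (ELphi G μ) := EL_phi_meas hG μ
  have hFeq : ∀ x, ELphi G (c • ρ + s • μ) x = c * ELphi G ρ x + s * ELphi G μ x := by
    intro x
    show (∫⁻ y, G (x - y) ∂(c • ρ + s • μ)) = _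
    rw [lintegral_add_measure, lintegral_smul_measure, lintegral_smul_measure]
    rfl
  show (∫⁻ x, ELphi G (c • ρ + s • μ) x ∂(c • ρ + s • μ)) = _
  rw [lintegral_congr hFeq, lintegral_add_measure, lintegral_smul_measure,
    lintegral_smul_measure, lintegral_add_left (hφρ.const_mul c),
    lintegral_const_mul c hφρ, lintegral_const_mul s hφμ,
    lintegral_add_left (hφρ.const_mul c),
    lintegral_const_mul c hφρ, lintegral_const_mul s hφμ]
  rfl

/-- Energy in terms of the nonnegative kernel. -/
lemma EL_energy_eq {d : ℕ} (W : Ed d → EReal) (hW : Measurable W) (k : ℝ) (hk : 0 ≤ k)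
    (hb : ∀ x, -(k : EReal) ≤ W x) (μ : Measure (Ed d)) [IsProbabilityMeasure μ] :
    energy W μ = ((1 / 2 : ℝ) : EReal) *
      (((Jf (fun z => (W z + (k : EReal)).abs) μ μ : ℝ≥0∞) : EReal) - ((k : ℝ) : EReal)) := by
  have hGm : Measurable fun z : Ed d => (W z + (k : EReal)).abs :=
    EL_meas_abs.comp ((EL_meas_add_const k).comp hW)
  have hmeas : Measurable fun p : Ed d × Ed d => W (p.1 - p.2) :=
    hW.comp (measurable_fst.sub measurable_snd)
  rw [energy, EL_eInt_eq (μ.prod μ) _ hmeas k hk (fun p => hb _)]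
  have h2 : (∫⁻ p, ((fun p : Ed d × Ed d => W (p.1 - p.2)) p + (k : EReal)).abs ∂(μ.prod μ))
      = Jf (fun z => (W z + (k : EReal)).abs) μ μ := EL_Jf_prod hGm μ μ
  rw [h2]
lemma EL_exists_finite {d : ℕ} (hd : 1 ≤ d) (G : Ed d → ℝ≥0∞) (hG : Measurable G)
    (hloc2 : (∫⁻ z in Metric.ball (0 : Ed d) 2, G z ∂volume) ≠ ⊤) :
    ∃ μ₀ : Measure (Ed d), IsProbabilityMeasure μ₀ ∧ Jf G μ₀ μ₀ ≠ ⊤ := by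
  classical
  have hnt : Nontrivial (Ed d) := by
    refine ⟨⟨EuclideanSpace.single ⟨0, hd⟩ 1, 0, ?_⟩⟩
    intro h
    have := congrArg (fun v : Ed d => v ⟨0, hd⟩) h
    simp at this
  set B1 : Set (Ed d) := Metric.ball 0 1 with hB1
  set v : ℝ≥0∞ := volume B1 with hv
  have hv0 : v ≠ 0 := (Metric.measure_ball_pos _ _ one_pos).ne'
  have hvtop : v ≠ ⊤ := measure_ball_lt_top.ne
  set C : ℝ≥0∞ := ∫⁻ z in Metric.ball (0 : Ed d) 2, G z ∂volume with hC
  set μ₀ : Measure (Ed d) := v⁻¹ • volume.restrict B1 with hμ₀def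
  have hprob : IsProbabilityMeasure μ₀ := by
    constructor
    rw [hμ₀def, Measure.smul_apply, Measure.restrict_apply_univ, smul_eq_mul]
    exact ENNReal.inv_mul_cancel hv0 hvtop
  refine ⟨μ₀, hprob, ?_⟩
  -- inner translation bound
  have hinner : ∀ x ∈ B1, (∫⁻ y in B1, G (x - y) ∂volume) ≤ C := by
    intro x hx
    have hind : Measurable ((Metric.ball (0 : Ed d) 2).indicator G) :=
      hG.indicator measurableSet_ball
    have h1 : (∫⁻ y in B1, G (x - y) ∂volume)
        ≤ ∫⁻ y, (Metric.ball (0 : Ed d) 2).indicator G (x - y) ∂volume := by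
      rw [← lintegral_indicator measurableSet_ball]
      refine lintegral_mono fun y => ?_
      by_cases hy : y ∈ B1
      · rw [Set.indicator_of_mem hy]
        have hxy : x - y ∈ Metric.ball (0 : Ed d) 2 := by
          rw [mem_ball_zero_iff]
          have h1 : ‖x‖ < 1 := mem_ball_zero_iff.mp hx
          have h2 : ‖y‖ < 1 := mem_ball_zero_iff.mp hy
          calc ‖x - y‖ ≤ ‖x‖ + ‖y‖ := norm_sub_le x y
          _ < 2 := by linarith
        rw [Set.indicator_of_mem hxy]
      · rw [Set.indicator_of_notMem hy]
        exact zero_le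
    have h2 : (∫⁻ y, (Metric.ball (0 : Ed d) 2).indicator G (x - y) ∂volume)
        = ∫⁻ z, (Metric.ball (0 : Ed d) 2).indicator G z ∂volume :=
      (Measure.measurePreserving_sub_left volume x).lintegral_comp hind
    calc (∫⁻ y in B1, G (x - y) ∂volume) ≤ _ := h1
    _ = ∫⁻ z, (Metric.ball (0 : Ed d) 2).indicator G z ∂volume := h2
    _ = C := by rw [lintegral_indicator measurableSet_ball]
  have step1 : ∀ x : Ed d, ELphi G μ₀ x = v⁻¹ * ∫⁻ y in B1, G (x - y) ∂volume := by
    intro x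
    show (∫⁻ y, G (x - y) ∂μ₀) = _
    rw [hμ₀def, lintegral_smul_measure, smul_eq_mul]
  have step2 : Jf G μ₀ μ₀ = v⁻¹ * ∫⁻ x in B1, (v⁻¹ * ∫⁻ y in B1, G (x - y) ∂volume) ∂volume := by
    show (∫⁻ x, ELphi G μ₀ x ∂μ₀) = _
    rw [lintegral_congr step1, hμ₀def, lintegral_smul_measure, smul_eq_mul]
  have step3 : Jf G μ₀ μ₀ ≤ v⁻¹ * ((v⁻¹ * C) * v) := by
    rw [step2]
    refine mul_le_mul_right ?_ _
    calc (∫⁻ x in B1, (v⁻¹ * ∫⁻ y in B1, G (x - y) ∂volume) ∂volume)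
        ≤ ∫⁻ _x in B1, (v⁻¹ * C) ∂volume :=
          setLIntegral_mono measurable_const fun x hx => mul_le_mul_right (hinner x hx) _
    _ = (v⁻¹ * C) * v := by rw [setLIntegral_const]
  intro htop
  rw [htop] at step3
  have : v⁻¹ * ((v⁻¹ * C) * v) ≠ ⊤ := by
    apply ENNReal.mul_ne_top (ENNReal.inv_ne_top.mpr hv0)
    exact ENNReal.mul_ne_top (ENNReal.mul_ne_top (ENNReal.inv_ne_top.mpr hv0) hloc2) hvtop
  exact this (top_le_iff.mp step3)
theorem eulerLagrange_global'
    {d : ℕ} (hd : 1 ≤ d) (W : Ed d → EReal) (hWmeas : Measurable W)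
    (Wmin : ℝ) (hWmin : Wmin < 0) (hbound : ∀ x, (Wmin : EReal) ≤ W x)
    (hloc : ∀ (x : Ed d) (r : ℝ), 0 < r →
      ∫⁻ y in Metric.ball x r, (W y).abs ∂volume < ⊤)
    (hsym : ∀ x, W (-x) = W x)
    (hlsc : LowerSemicontinuous W)
    (ρ : Measure (Ed d)) (hprob : IsProbabilityMeasure ρ)
    (hmin : ∀ μ : Measure (Ed d), IsProbabilityMeasure μ → energy W ρ ≤ energy W μ) :
    ∀ᵐ x ∂ρ, eInt ρ (fun y => W (x - y)) = ((2 : ℝ) : EReal) * energy W ρ := by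
  classical
  set k : ℝ := -Wmin with hkdef
  have hk0 : 0 < k := by rw [hkdef]; linarith
  have hbW : ∀ x, -(k : EReal) ≤ W x := by
    intro x
    have h1 : -((k : ℝ) : EReal) = ((Wmin : ℝ) : EReal) := by
      rw [← EReal.coe_neg, hkdef, neg_neg]
    rw [h1]
    exact hbound x
  set G : Ed d → ℝ≥0∞ := fun z => (W z + (k : EReal)).abs with hGdef
  have hGmeas : Measurable G := EL_meas_abs.comp ((EL_meas_add_const k).comp hWmeas)
  have hGsym : ∀ z, G (-z) = G z := by
    intro z
    rw [hGdef]
    simp only [hsym]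
  have energy_eq : ∀ (μ : Measure (Ed d)), IsProbabilityMeasure μ →
      energy W μ = ((1 / 2 : ℝ) : EReal) *
        (((Jf G μ μ : ℝ≥0∞) : EReal) - ((k : ℝ) : EReal)) := by
    intro μ hμ
    haveI := hμ
    rw [hGdef]
    exact EL_energy_eq W hWmeas k hk0.le hbW μ
  have hloc2 : (∫⁻ z in Metric.ball (0 : Ed d) 2, G z ∂volume) ≠ ⊤ := by
    have hWabs : Measurable fun z : Ed d => (W z).abs := EL_meas_abs.comp hWmeas
    have hfin : (∫⁻ z in Metric.ball (0 : Ed d) 2, (W z).abs ∂volume)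
        + ENNReal.ofReal k * volume (Metric.ball (0 : Ed d) 2) ≠ ⊤ := by
      apply ENNReal.add_ne_top.mpr
      exact ⟨(hloc 0 2 two_pos).ne,
        ENNReal.mul_ne_top ENNReal.ofReal_ne_top measure_ball_lt_top.ne⟩
    refine ne_top_of_le_ne_top hfin ?_
    calc (∫⁻ z in Metric.ball (0 : Ed d) 2, G z ∂volume)
        ≤ ∫⁻ z in Metric.ball (0 : Ed d) 2, ((W z).abs + ENNReal.ofReal k) ∂volume := by
          refine lintegral_mono fun z => ?_
          rw [hGdef]
          exact EL_abs_add_le k hk0.le (W z)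
    _ = (∫⁻ z in Metric.ball (0 : Ed d) 2, (W z).abs ∂volume)
        + ENNReal.ofReal k * volume (Metric.ball (0 : Ed d) 2) := by
          rw [lintegral_add_left hWabs, setLIntegral_const]
  obtain ⟨μ₀, hμ₀prob, hJμ₀⟩ := EL_exists_finite hd G hGmeas hloc2
  have hkey : ∀ μ : Measure (Ed d), IsProbabilityMeasure μ → Jf G ρ ρ ≤ Jf G μ μ := by
    intro μ hμ
    have hE := hmin μ hμ
    rw [energy_eq ρ hprob, energy_eq μ hμ] at hE
    by_cases htμ : Jf G μ μ = ⊤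
    · rw [htμ]; exact le_top
    by_cases htρ : Jf G ρ ρ = ⊤
    · exfalso
      rw [htρ, EReal.coe_ennreal_top, EReal.top_sub_coe,
        EReal.coe_mul_top_of_pos (by norm_num : (0:ℝ) < 1/2)] at hE
      rw [EL_coe_enn _ htμ, ← EReal.coe_sub, ← EReal.coe_mul] at hE
      exact EReal.coe_ne_top _ (top_le_iff.mp hE)
    · rw [EL_coe_enn _ htρ, EL_coe_enn _ htμ, ← EReal.coe_sub, ← EReal.coe_sub,
        ← EReal.coe_mul, ← EReal.coe_mul, EReal.coe_le_coe_iff] at hE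
      have h2 : (Jf G ρ ρ).toReal ≤ (Jf G μ μ).toReal := by linarith
      exact (ENNReal.toReal_le_toReal htρ htμ).mp h2
  have hItop : Jf G ρ ρ ≠ ⊤ := ne_top_of_le_ne_top hJμ₀ (hkey μ₀ hμ₀prob)
  -- key variational inequality
  have key : ∀ A : Set (Ed d), MeasurableSet A →
      ρ A * Jf G ρ ρ ≤ ∫⁻ x in A, ELphi G ρ x ∂ρ := by
    intro A hA
    by_cases ha0 : ρ A = 0
    · rw [ha0, zero_mul]; exact zero_le
    set a : ℝ≥0∞ := ρ A with hadef
    have hatop : a ≠ ⊤ := measure_ne_top ρ A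
    have hainvtop : a⁻¹ ≠ ⊤ := ENNReal.inv_ne_top.mpr ha0
    set μ : Measure (Ed d) := a⁻¹ • ρ.restrict A with hμdef
    haveI hμprob : IsProbabilityMeasure μ := by
      constructor
      rw [hμdef, Measure.smul_apply, Measure.restrict_apply_univ, smul_eq_mul]
      exact ENNReal.inv_mul_cancel ha0 hatop
    have hCle : Jf G ρ μ ≤ a⁻¹ * Jf G ρ ρ := by
      show (∫⁻ x, ELphi G μ x ∂ρ) ≤ a⁻¹ * Jf G ρ ρ
      have hpt : ∀ x, ELphi G μ x ≤ a⁻¹ * ELphi G ρ x := by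
        intro x
        show (∫⁻ y, G (x - y) ∂μ) ≤ a⁻¹ * ∫⁻ y, G (x - y) ∂ρ
        rw [hμdef, lintegral_smul_measure, smul_eq_mul]
        exact mul_le_mul_right (lintegral_mono' Measure.restrict_le_self le_rfl) _
      calc (∫⁻ x, ELphi G μ x ∂ρ) ≤ ∫⁻ x, a⁻¹ * ELphi G ρ x ∂ρ := lintegral_mono hpt
      _ = a⁻¹ * Jf G ρ ρ := lintegral_const_mul _ (EL_phi_meas hGmeas ρ)
    have hCtop : Jf G ρ μ ≠ ⊤ :=
      ne_top_of_le_ne_top (ENNReal.mul_ne_top hainvtop hItop) hCle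
    have hMle : Jf G μ μ ≤ a⁻¹ * Jf G ρ μ := by
      show (∫⁻ x, ELphi G μ x ∂μ) ≤ a⁻¹ * Jf G ρ μ
      have : Jf G ρ μ = ∫⁻ x, ELphi G μ x ∂ρ := rfl
      rw [this, hμdef, lintegral_smul_measure, smul_eq_mul]
      refine mul_le_mul_right (lintegral_mono' Measure.restrict_le_self le_rfl) _
    have hMtop : Jf G μ μ ≠ ⊤ :=
      ne_top_of_le_ne_top (ENNReal.mul_ne_top hainvtop hCtop) hMle
    have hquad : (Jf G ρ ρ).toReal ≤ (Jf G ρ μ).toReal := by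
      apply EL_quad (m := (Jf G μ μ).toReal)
      intro t ht0 ht1
      set s : ℝ≥0∞ := ENNReal.ofReal t with hsdef
      have hs1 : s ≤ 1 := by rw [hsdef]; exact ENNReal.ofReal_le_one.mpr ht1.le
      have hstop : s ≠ ⊤ := ENNReal.ofReal_ne_top
      have h1stop : (1:ℝ≥0∞) - s ≠ ⊤ := (lt_of_le_of_lt tsub_le_self ENNReal.one_lt_top).ne
      have hρtprob : IsProbabilityMeasure (((1:ℝ≥0∞) - s) • ρ + s • μ) := by
        constructor
        rw [Measure.add_apply, Measure.smul_apply, Measure.smul_apply,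
          measure_univ, measure_univ, smul_eq_mul, smul_eq_mul, mul_one, mul_one]
        exact tsub_add_cancel_of_le hs1
      have h := hkey _ hρtprob
      rw [EL_Jf_expand hGmeas ρ μ s, EL_Jf_swap hGmeas hGsym μ ρ] at h
      have hX1 : ((1:ℝ≥0∞)-s) * Jf G ρ ρ + s * Jf G ρ μ ≠ ⊤ :=
        ENNReal.add_ne_top.mpr ⟨ENNReal.mul_ne_top h1stop hItop, ENNReal.mul_ne_top hstop hCtop⟩
      have hX2 : ((1:ℝ≥0∞)-s) * Jf G ρ μ + s * Jf G μ μ ≠ ⊤ :=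
        ENNReal.add_ne_top.mpr ⟨ENNReal.mul_ne_top h1stop hCtop, ENNReal.mul_ne_top hstop hMtop⟩
      have hRHS : (((1:ℝ≥0∞)-s) * (((1:ℝ≥0∞)-s) * Jf G ρ ρ + s * Jf G ρ μ)
          + s * (((1:ℝ≥0∞)-s) * Jf G ρ μ + s * Jf G μ μ)) ≠ ⊤ :=
        ENNReal.add_ne_top.mpr ⟨ENNReal.mul_ne_top h1stop hX1, ENNReal.mul_ne_top hstop hX2⟩
      have h' := ENNReal.toReal_mono hRHS h
      rw [ENNReal.toReal_add (ENNReal.mul_ne_top h1stop hX1) (ENNReal.mul_ne_top hstop hX2),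
        ENNReal.toReal_mul, ENNReal.toReal_mul,
        ENNReal.toReal_add (ENNReal.mul_ne_top h1stop hItop) (ENNReal.mul_ne_top hstop hCtop),
        ENNReal.toReal_add (ENNReal.mul_ne_top h1stop hCtop) (ENNReal.mul_ne_top hstop hMtop),
        ENNReal.toReal_mul, ENNReal.toReal_mul, ENNReal.toReal_mul, ENNReal.toReal_mul] at h'
      have hts : s.toReal = t := by rw [hsdef]; exact ENNReal.toReal_ofReal ht0.le
      have h1s : ((1:ℝ≥0∞) - s).toReal = 1 - t := by
        rw [hsdef, ← ENNReal.ofReal_one, ← ENNReal.ofReal_sub _ ht0.le,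
          ENNReal.toReal_ofReal (by linarith)]
      rw [hts, h1s] at h'
      exact h'
    have hi_le : Jf G ρ ρ ≤ Jf G ρ μ := (ENNReal.toReal_le_toReal hItop hCtop).mp hquad
    have hfinal : ∫⁻ x in A, ELphi G ρ x ∂ρ = a * Jf G ρ μ := by
      rw [EL_Jf_swap hGmeas hGsym ρ μ]
      have : Jf G μ ρ = ∫⁻ x, ELphi G ρ x ∂μ := rfl
      rw [this, hμdef, lintegral_smul_measure, smul_eq_mul, ← mul_assoc,
        ENNReal.mul_inv_cancel ha0 hatop, one_mul]
    rw [hfinal]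
    exact mul_le_mul_right hi_le a
  -- a.e. conclusion
  have hφmeas : Measurable (ELphi G ρ) := EL_phi_meas hGmeas ρ
  have htot : (∫⁻ x, ELphi G ρ x ∂ρ) = Jf G ρ ρ := rfl
  have hupper : ∀ n : ℕ, ρ {x | ELphi G ρ x + ((n : ℝ≥0∞))⁻¹ ≤ Jf G ρ ρ} = 0 := by
    intro n
    set ε : ℝ≥0∞ := ((n : ℝ≥0∞))⁻¹ with hε
    set A : Set (Ed d) := {x | ELphi G ρ x + ε ≤ Jf G ρ ρ} with hA
    have hAmeas : MeasurableSet A :=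
      measurableSet_le (hφmeas.add measurable_const) measurable_const
    by_contra hA0
    have hane : Set.Nonempty A := by
      rw [Set.nonempty_iff_ne_empty]
      intro he
      rw [hA] at he
      apply hA0
      rw [hA, he]
      exact measure_empty
    obtain ⟨x₀, hx₀⟩ := hane
    have hx₀' : ELphi G ρ x₀ + ε ≤ Jf G ρ ρ := hx₀
    have hεI : ε ≤ Jf G ρ ρ := le_trans le_add_self hx₀'
    have hε0 : ε ≠ 0 := ENNReal.inv_ne_zero.mpr (ENNReal.natCast_ne_top n)
    have hI0 : Jf G ρ ρ ≠ 0 := by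
      intro h0
      rw [h0] at hεI
      exact hε0 (le_antisymm hεI zero_le)
    have hεtop : ε ≠ ⊤ := ne_top_of_le_ne_top hItop hεI
    have hub : ∫⁻ x in A, ELphi G ρ x ∂ρ ≤ (Jf G ρ ρ - ε) * ρ A := by
      calc ∫⁻ x in A, ELphi G ρ x ∂ρ ≤ ∫⁻ _x in A, (Jf G ρ ρ - ε) ∂ρ :=
          setLIntegral_mono measurable_const fun x hx => ENNReal.le_sub_of_add_le_right hεtop hx
      _ = (Jf G ρ ρ - ε) * ρ A := setLIntegral_const _ _
    have hlb := key A hAmeas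
    have hlt : (Jf G ρ ρ - ε) * ρ A < Jf G ρ ρ * ρ A := by
      refine ENNReal.mul_lt_mul_left hA0 (measure_ne_top ρ A) ?_
      exact ENNReal.sub_lt_self hItop hI0 hε0
    have hcon : Jf G ρ ρ * ρ A ≤ (Jf G ρ ρ - ε) * ρ A := by
      calc Jf G ρ ρ * ρ A = ρ A * Jf G ρ ρ := mul_comm _ _
      _ ≤ ∫⁻ x in A, ELphi G ρ x ∂ρ := hlb
      _ ≤ _ := hub
    exact absurd hcon (not_le.mpr hlt)
  have hge : ∀ᵐ x ∂ρ, Jf G ρ ρ ≤ ELphi G ρ x := by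
    have hnull : ρ {x | ELphi G ρ x < Jf G ρ ρ} = 0 := by
      have hsub : {x | ELphi G ρ x < Jf G ρ ρ} ⊆
          ⋃ n : ℕ, {x | ELphi G ρ x + ((n : ℝ≥0∞))⁻¹ ≤ Jf G ρ ρ} := by
        intro x hx
        have hx' : ELphi G ρ x < Jf G ρ ρ := hx
        have h1 : Jf G ρ ρ - ELphi G ρ x ≠ 0 := (tsub_pos_of_lt hx').ne'
        obtain ⟨n, hn⟩ := ENNReal.exists_inv_nat_lt h1
        refine Set.mem_iUnion.mpr ⟨n, ?_⟩
        show ELphi G ρ x + ((n : ℝ≥0∞))⁻¹ ≤ Jf G ρ ρ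
        calc ELphi G ρ x + ((n : ℝ≥0∞))⁻¹ ≤ ELphi G ρ x + (Jf G ρ ρ - ELphi G ρ x) :=
            add_le_add le_rfl hn.le
        _ = Jf G ρ ρ := add_tsub_cancel_of_le hx'.le
      exact measure_mono_null hsub (measure_iUnion_null hupper)
    rw [ae_iff]
    have hset : {x | ¬ Jf G ρ ρ ≤ ELphi G ρ x} = {x | ELphi G ρ x < Jf G ρ ρ} := by
      ext x
      simp [not_le]
    rw [hset]
    exact hnull
  have heq : (fun _ : Ed d => Jf G ρ ρ) =ᵐ[ρ] ELphi G ρ := by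
    refine ae_eq_of_ae_le_of_lintegral_le hge ?_ hφmeas.aemeasurable ?_
    · rw [lintegral_const, measure_univ, mul_one]
      exact hItop
    · rw [htot, lintegral_const, measure_univ, mul_one]
  filter_upwards [heq] with x hx
  have h1 := EL_eInt_eq ρ (fun y => W (x - y))
      (hWmeas.comp (measurable_const.sub measurable_id)) k hk0.le (fun y => hbW _)
  have h2 : (∫⁻ y, ((fun y => W (x - y)) y + (k : EReal)).abs ∂ρ) = ELphi G ρ x := by
    rw [hGdef]
    rfl
  rw [h1, h2, ← hx, energy_eq ρ hprob, EL_coe_enn _ hItop,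
    ← EReal.coe_sub, ← EReal.coe_mul, ← EReal.coe_mul, EReal.coe_eq_coe_iff]
  ring

/-- **Euler–Lagrange condition for global minimisers.** If `W` satisfies (H1), (H2), (H3),
(H5) and `ρ` is a global minimiser of the interaction energy on `P(ℝ^d)`, then
`W ∗ ρ = 2 E(ρ)` holds `ρ`-almost everywhere. -/
theorem eulerLagrange_global
    {d : ℕ} (hd : 1 ≤ d) (W : Ed d → EReal) (hWmeas : Measurable W)
    (Wmin : ℝ) (hWmin : Wmin < 0) (hbound : ∀ x, (Wmin : EReal) ≤ W x)
    (hloc : ∀ (x : Ed d) (r : ℝ), 0 < r →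
      ∫⁻ y in Metric.ball x r, (W y).abs ∂volume < ⊤)
    (hsym : ∀ x, W (-x) = W x)
    (hlsc : LowerSemicontinuous W)
    (ρ : Measure (Ed d)) (hρ : IsMinimiser W ρ) :
    ∀ᵐ x ∂ρ, eInt ρ (fun y => W (x - y)) = ((2 : ℝ) : EReal) * energy W ρ := by
  obtain ⟨hprob, hmin⟩ := hρ
  exact eulerLagrange_global' hd W hWmeas Wmin hWmin hbound hloc hsym hlsc ρ hprob hmin
end
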